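/- arXiv:2002.02873 — 3 statements merged into one kernel-verified Lean document; each statement's English description precedes it below -/
import Mathlib

section
/- In a real Hilbert space, suppose f is L-smooth and gradients are bounded by M: ‖∇f(x)‖ ≤ M and ‖g‖ ≤ M for the sample gradient g at y. If x_k = x_{k-1} - γ g and y = (1-α)x̄ + α x_{k-1}, then f(x_k) ≤ f(x_{k-1}) - γ(1 - Lγ)‖∇f(y)‖² + (L(1-α)²/2)‖x_{k-1} - x̄‖² - γ⟨∇f(x_{k-1}) - Lγ∇f(y), g - ∇f(y)⟩ + 2M²Lγ². -/
open scoped RealInnerProductSpace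

theorem stmt_6 {H : Type*} [NormedAddCommGroup H] [InnerProductSpace ℝ H]
    (f : H → ℝ) (gf : H → H) (L M γ α : ℝ) (hL : 0 < L) (hγ : 0 < γ)
    (hα : 0 ≤ α ∧ α ≤ 1)
    (hlip : ∀ x y : H, ‖gf x - gf y‖ ≤ L * ‖x - y‖)
    (hsmooth : ∀ x y : H, f y ≤ f x + ⟪gf x, y - x⟫ + L / 2 * ‖y - x‖ ^ 2)
    (hbd : ∀ x : H, ‖gf x‖ ≤ M)
    (xprev xbar g : H) (hg : ‖g‖ ≤ M)
    (y xk : H) (hy : y = (1 - α) • xbar + α • xprev)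
    (hupd : xk = xprev - γ • g) :
    f xk ≤ f xprev - γ * (1 - L * γ) * ‖gf y‖ ^ 2
      + L * (1 - α) ^ 2 / 2 * ‖xprev - xbar‖ ^ 2
      - γ * ⟪gf xprev - (L * γ) • gf y, g - gf y⟫
      + 2 * M ^ 2 * L * γ ^ 2 := by
  obtain ⟨hα0, hα1⟩ := hα
  have h1 := hsmooth xprev xk
  have hdiff : xk - xprev = -(γ • g) := by rw [hupd]; abel
  have hin : ⟪gf xprev, xk - xprev⟫ = -(γ * ⟪gf xprev, g⟫) := by
    rw [hdiff, inner_neg_right, real_inner_smul_right]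
  have hn : ‖xk - xprev‖ = γ * ‖g‖ := by
    rw [hdiff, norm_neg, norm_smul, Real.norm_eq_abs, abs_of_pos hγ]
  have hyx : y - xprev = (1 - α) • (xbar - xprev) := by rw [hy]; module
  have hny : ‖y - xprev‖ = (1 - α) * ‖xprev - xbar‖ := by
    rw [hyx, norm_smul, Real.norm_eq_abs, abs_of_nonneg (by linarith), norm_sub_rev]
  have hlipy : ‖gf y - gf xprev‖ ≤ L * ((1 - α) * ‖xprev - xbar‖) := by
    calc ‖gf y - gf xprev‖ ≤ L * ‖y - xprev‖ := hlip y xprev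
    _ = L * ((1 - α) * ‖xprev - xbar‖) := by rw [hny]
  have hMg : 0 ≤ M := le_trans (norm_nonneg g) hg
  have hF1 : ⟪gf y - gf xprev, gf y⟫ ≤ L * ((1 - α) * ‖xprev - xbar‖) * M := by
    calc ⟪gf y - gf xprev, gf y⟫ ≤ ‖gf y - gf xprev‖ * ‖gf y‖ := real_inner_le_norm _ _
    _ ≤ L * ((1 - α) * ‖xprev - xbar‖) * M :=
        mul_le_mul hlipy (hbd y) (norm_nonneg _)
          (mul_nonneg hL.le (mul_nonneg (by linarith) (norm_nonneg _)))
  have hF1' : ⟪gf y - gf xprev, gf y⟫ = ‖gf y‖ ^ 2 - ⟪gf xprev, gf y⟫ := by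
    rw [inner_sub_left, real_inner_self_eq_norm_sq]
  have hF3 : -(M * M) ≤ ⟪gf y, g⟫ := by
    have h3 := abs_real_inner_le_norm (gf y) g
    have h4 : ‖gf y‖ * ‖g‖ ≤ M * M :=
      mul_le_mul (hbd y) hg (norm_nonneg _) hMg
    have h5 := abs_le.mp h3
    linarith
  have hexp : ⟪gf xprev - (L * γ) • gf y, g - gf y⟫
      = ⟪gf xprev, g⟫ - ⟪gf xprev, gf y⟫ - L * γ * ⟪gf y, g⟫
        + L * γ * ‖gf y‖ ^ 2 := by
    simp only [inner_sub_left, inner_sub_right, real_inner_smul_left,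
      real_inner_self_eq_norm_sq]
    ring
  rw [hin, hn] at h1
  rw [hexp]
  have hF1g : γ * (‖gf y‖ ^ 2 - ⟪gf xprev, gf y⟫)
      ≤ γ * (L * ((1 - α) * ‖xprev - xbar‖) * M) := by
    rw [← hF1']
    exact mul_le_mul_of_nonneg_left hF1 hγ.le
  have hyoung : γ * (L * ((1 - α) * ‖xprev - xbar‖) * M)
      ≤ L * (1 - α) ^ 2 / 2 * ‖xprev - xbar‖ ^ 2 + L * γ ^ 2 * M ^ 2 / 2 := by
    nlinarith [mul_nonneg hL.le (sq_nonneg ((1 - α) * ‖xprev - xbar‖ - γ * M))]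
  have hv : ‖g‖ ^ 2 ≤ M ^ 2 := by nlinarith [norm_nonneg g]
  have hvL : L * γ ^ 2 / 2 * ‖g‖ ^ 2 ≤ L * γ ^ 2 / 2 * M ^ 2 :=
    mul_le_mul_of_nonneg_left hv (by positivity)
  have hF3' : -(L * γ ^ 2 * ⟪gf y, g⟫) ≤ L * γ ^ 2 * (M * M) := by
    have := mul_le_mul_of_nonneg_left hF3 (by positivity : (0:ℝ) ≤ L * γ ^ 2)
    linarith
  linarith [hF1g, hyoung, hvL, hF3', h1]
end

section
/- Under the recursion x̄_k - x_k = Γ_k ∑_{t=1}^{k} ((γ_t - β_t)/Γ_t) g_t with ‖g_t‖ ≤ M, α_t ∈ (0,1], α_1 = 1, γ_t ≥ β_t, and ∑_{t=1}^{k} α_t/Γ_t = 1/Γ_k, one has ‖x̄_k - x_k‖² ≤ M² Γ_k ∑_{t=1}^{k} (γ_t - β_t)²/(Γ_t α_t). -/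
theorem stmt_8 {H : Type*} [NormedAddCommGroup H] [InnerProductSpace ℝ H]
    (g : ℕ → H) (α γ β Γ : ℕ → ℝ) (M : ℝ) (hM : 0 ≤ M)
    (k : ℕ) (hk : 1 ≤ k)
    (hΓpos : ∀ t, 1 ≤ t → 0 < Γ t)
    (hα : ∀ t, 1 ≤ t → 0 < α t ∧ α t ≤ 1) (hα1 : α 1 = 1)
    (hγβ : ∀ t, 1 ≤ t → β t ≤ γ t)
    (hg : ∀ t, 1 ≤ t → ‖g t‖ ≤ M)
    (hsum : ∑ t ∈ Finset.Icc 1 k, α t / Γ t = 1 / Γ k)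
    (xbk xk : H)
    (heq : xbk - xk = Γ k • ∑ t ∈ Finset.Icc 1 k, ((γ t - β t) / Γ t) • g t) :
    ‖xbk - xk‖ ^ 2 ≤ M ^ 2 * Γ k * ∑ t ∈ Finset.Icc 1 k,
      (γ t - β t) ^ 2 / (Γ t * α t) := by
  set S := ∑ t ∈ Finset.Icc 1 k, ((γ t - β t) / Γ t) * M with hS
  have hΓk := hΓpos k hk
  have hSnonneg : 0 ≤ S := Finset.sum_nonneg fun t ht => by
    have ht1 := (Finset.mem_Icc.mp ht).1
    exact mul_nonneg (div_nonneg (sub_nonneg.2 (hγβ t ht1)) (hΓpos t ht1).le) hM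
  have hnorm : ‖xbk - xk‖ ≤ Γ k * S := by
    rw [heq, norm_smul, Real.norm_eq_abs, abs_of_pos hΓk]
    refine mul_le_mul_of_nonneg_left ?_ hΓk.le
    refine (norm_sum_le _ _).trans (Finset.sum_le_sum fun t ht => ?_)
    have ht1 := (Finset.mem_Icc.mp ht).1
    have hc : 0 ≤ (γ t - β t) / Γ t :=
      div_nonneg (sub_nonneg.2 (hγβ t ht1)) (hΓpos t ht1).le
    rw [norm_smul, Real.norm_eq_abs, abs_of_nonneg hc]
    exact mul_le_mul_of_nonneg_left (hg t ht1) hc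
  have hCS : S ^ 2 ≤ (∑ t ∈ Finset.Icc 1 k, M ^ 2 * ((γ t - β t) ^ 2 / (Γ t * α t)))
      * (∑ t ∈ Finset.Icc 1 k, α t / Γ t) := by
    have h := Finset.sum_mul_sq_le_sq_mul_sq (Finset.Icc 1 k)
      (fun t => ((γ t - β t) / Γ t * M) / Real.sqrt (α t / Γ t))
      (fun t => Real.sqrt (α t / Γ t))
    have he1 : ∑ t ∈ Finset.Icc 1 k,
        ((γ t - β t) / Γ t * M) / Real.sqrt (α t / Γ t) * Real.sqrt (α t / Γ t) = S := by
      refine Finset.sum_congr rfl fun t ht => ?_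
      have ht1 := (Finset.mem_Icc.mp ht).1
      have hpos : 0 < α t / Γ t := div_pos (hα t ht1).1 (hΓpos t ht1)
      exact div_mul_cancel₀ _ (Real.sqrt_ne_zero'.mpr hpos)
    have he2 : ∑ t ∈ Finset.Icc 1 k,
        (((γ t - β t) / Γ t * M) / Real.sqrt (α t / Γ t)) ^ 2
        = ∑ t ∈ Finset.Icc 1 k, M ^ 2 * ((γ t - β t) ^ 2 / (Γ t * α t)) := by
      refine Finset.sum_congr rfl fun t ht => ?_
      have ht1 := (Finset.mem_Icc.mp ht).1
      have hΓt := hΓpos t ht1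
      have hαt := (hα t ht1).1
      have hpos : 0 < α t / Γ t := div_pos hαt hΓt
      rw [div_pow, Real.sq_sqrt hpos.le]
      field_simp
    have he3 : ∑ t ∈ Finset.Icc 1 k, (Real.sqrt (α t / Γ t)) ^ 2
        = ∑ t ∈ Finset.Icc 1 k, α t / Γ t := by
      refine Finset.sum_congr rfl fun t ht => ?_
      have ht1 := (Finset.mem_Icc.mp ht).1
      exact Real.sq_sqrt (div_pos (hα t ht1).1 (hΓpos t ht1)).le
    rw [he1, he2, he3] at h
    exact h
  calc ‖xbk - xk‖ ^ 2 ≤ (Γ k * S) ^ 2 := by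
        exact pow_le_pow_left₀ (norm_nonneg _) hnorm 2
    _ = Γ k ^ 2 * S ^ 2 := by ring
    _ ≤ Γ k ^ 2 * ((∑ t ∈ Finset.Icc 1 k, M ^ 2 * ((γ t - β t) ^ 2 / (Γ t * α t)))
          * (∑ t ∈ Finset.Icc 1 k, α t / Γ t)) := by
        exact mul_le_mul_of_nonneg_left hCS (sq_nonneg _)
    _ = M ^ 2 * Γ k * ∑ t ∈ Finset.Icc 1 k, (γ t - β t) ^ 2 / (Γ t * α t) := by
        rw [hsum, ← Finset.mul_sum]
        field_simp
end

section
/- In a real Hilbert space, let x_k = argmin_{x∈X} { γ[⟨g, x - y⟩ + (μ/2)‖x - y‖²] + (1/2)‖x - x_{k-1}‖² } over a closed convex set X with ‖g‖ ≤ M and ‖x - y‖ ≤ 2D for all x ∈ X. Then ‖x_k - x_{k-1}‖ ≤ (M + 2Dμ)γ. -/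
open scoped RealInnerProductSpace

theorem stmt_13 {H : Type*} [NormedAddCommGroup H] [InnerProductSpace ℝ H]
    (X : Set H) (hXc : IsClosed X) (hXconv : Convex ℝ X)
    (xprev y g xk : H) (hxprev : xprev ∈ X) (hy : y ∈ X) (hxk : xk ∈ X)
    (M D μ γ : ℝ) (hμ : 0 ≤ μ) (hγ : 0 < γ) (hg : ‖g‖ ≤ M)
    (hdiam : ∀ x ∈ X, ‖x - y‖ ≤ 2 * D)
    (hmin : ∀ x ∈ X,
      γ * (⟪g, xk - y⟫ + μ / 2 * ‖xk - y‖ ^ 2) + (1 / 2) * ‖xk - xprev‖ ^ 2 ≤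
      γ * (⟪g, x - y⟫ + μ / 2 * ‖x - y‖ ^ 2) + (1 / 2) * ‖x - xprev‖ ^ 2) :
    ‖xk - xprev‖ ≤ (M + 2 * D * μ) * γ := by
  set d := xprev - xk with hd
  have hstep : ∀ t : ℝ, 0 < t → t ≤ 1 →
      ‖d‖ ^ 2 - γ * ⟪g, d⟫ - γ * μ * ⟪xk - y, d⟫ ≤ t * ((γ * μ + 1) / 2 * ‖d‖ ^ 2) := by
    intro t ht ht1
    have hx : xk + t • d ∈ X := by
      have h := hXconv hxk hxprev (by linarith : (0:ℝ) ≤ 1 - t) ht.le (by ring)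
      convert h using 1
      rw [hd]; module
    have h := hmin _ hx
    have e1 : ⟪g, (xk + t • d) - y⟫ = ⟪g, xk - y⟫ + t * ⟪g, d⟫ := by
      have : (xk + t • d) - y = (xk - y) + t • d := by abel
      rw [this, inner_add_right, real_inner_smul_right]
    have e2 : ‖(xk + t • d) - y‖ ^ 2
        = ‖xk - y‖ ^ 2 + 2 * (t * ⟪xk - y, d⟫) + t ^ 2 * ‖d‖ ^ 2 := by
      have h1 : (xk + t • d) - y = (xk - y) + t • d := by abel
      rw [h1, norm_add_sq_real, real_inner_smul_right, norm_smul, Real.norm_eq_abs,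
        mul_pow, sq_abs]
    have e3 : ‖(xk + t • d) - xprev‖ ^ 2 = (t - 1) ^ 2 * ‖d‖ ^ 2 := by
      have h1 : (xk + t • d) - xprev = (t - 1) • d := by rw [hd]; module
      rw [h1, norm_smul, Real.norm_eq_abs, mul_pow, sq_abs]
    have e4 : ‖xk - xprev‖ ^ 2 = ‖d‖ ^ 2 := by
      rw [hd, ← norm_neg]; congr 1; abel
    rw [e1, e2, e3, e4] at h
    have h' : 0 ≤ t * (γ * ⟪g, d⟫ + γ * μ * ⟪xk - y, d⟫ - ‖d‖ ^ 2
        + t * ((γ * μ + 1) / 2 * ‖d‖ ^ 2)) := by nlinarith [h]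
    have := nonneg_of_mul_nonneg_right h' ht
    linarith
  have key : ‖d‖ ^ 2 ≤ γ * ⟪g, d⟫ + γ * μ * ⟪xk - y, d⟫ := by
    by_contra hc
    push_neg at hc
    set A := ‖d‖ ^ 2 - γ * ⟪g, d⟫ - γ * μ * ⟪xk - y, d⟫ with hA
    have hA0 : 0 < A := by simp [hA]; linarith
    set C := (γ * μ + 1) / 2 * ‖d‖ ^ 2 with hC
    have hC0 : 0 ≤ C := by positivity
    rcases eq_or_lt_of_le hC0 with hC0' | hC0'
    · have := hstep 1 one_pos le_rfl
      rw [← hC0'] at this; linarith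
    · have ht := hstep (min 1 (A / (2 * C))) (by positivity) (min_le_left _ _)
      have hle : min 1 (A / (2 * C)) * C ≤ A / 2 := by
        calc min 1 (A / (2 * C)) * C ≤ (A / (2 * C)) * C :=
              mul_le_mul_of_nonneg_right (min_le_right _ _) hC0
          _ = A / 2 := by field_simp
      linarith
  have hnd : ‖xk - xprev‖ = ‖d‖ := by rw [hd, ← norm_neg]; congr 1; abel
  rw [hnd]
  have h1 : ⟪g, d⟫ ≤ M * ‖d‖ :=
    le_trans (real_inner_le_norm g d) (mul_le_mul_of_nonneg_right hg (norm_nonneg d))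
  have h2 : ⟪xk - y, d⟫ ≤ 2 * D * ‖d‖ :=
    le_trans (real_inner_le_norm _ d)
      (mul_le_mul_of_nonneg_right (hdiam xk hxk) (norm_nonneg d))
  have hM : 0 ≤ M := le_trans (norm_nonneg g) hg
  have hD : 0 ≤ 2 * D := le_trans (norm_nonneg _) (hdiam xk hxk)
  rcases eq_or_lt_of_le (norm_nonneg d) with h0 | h0
  · rw [← h0]; positivity
  · have k1 : γ * ⟪g, d⟫ ≤ γ * (M * ‖d‖) := mul_le_mul_of_nonneg_left h1 hγ.le
    have k2 : γ * μ * ⟪xk - y, d⟫ ≤ γ * μ * (2 * D * ‖d‖) :=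
      mul_le_mul_of_nonneg_left h2 (by positivity)
    have h3 : ‖d‖ * ‖d‖ ≤ (γ * (M + 2 * D * μ)) * ‖d‖ := by nlinarith [key, k1, k2]
    have := (mul_le_mul_iff_of_pos_right h0).mp h3
    linarith
end
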